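/- Let σ₀ > 1 and σ > 1 be real numbers. Then ∑_{m₁,m₂,n₁≥1} (m₁m₂)^{-σ₀} ∑_{r=1}^{m₁+n₁} (m₁+n₁)^{-σ} (m₁+n₁+r)^{-σ} / log(1 + r/(m₁+n₁)) is finite. -/

import Mathlib

set_option maxHeartbeats 1000000

open Real Finset

private lemma log_ge_div (x : ℝ) (hx : 0 < x) : x / (1 + x) ≤ Real.log (1 + x) := by
  have h1 : (0:ℝ) < 1 + x := by linarith
  have := Real.log_le_sub_one_of_pos (x := (1 + x)⁻¹) (by positivity)
  rw [Real.log_inv] at this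
  have : -(Real.log (1 + x)) ≤ (1 + x)⁻¹ - 1 := this
  have h2 : (1 + x)⁻¹ - 1 = -(x / (1 + x)) := by
    field_simp
    ring
  rw [h2] at this
  linarith

theorem stmt7 (σ₀ σ : ℝ) (h0 : 1 < σ₀) (h : 1 < σ) :
    Summable (fun q : ℕ × ℕ × ℕ =>
      (((q.1 + 1) * (q.2.1 + 1) : ℕ) : ℝ) ^ (-σ₀) *
        ∑ r ∈ Finset.Icc 1 ((q.1 + 1) + (q.2.2 + 1)),
          (((q.1 + 1) + (q.2.2 + 1) : ℕ) : ℝ) ^ (-σ) *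
            (((q.1 + 1) + (q.2.2 + 1) + r : ℕ) : ℝ) ^ (-σ) /
            Real.log (1 + (r : ℝ) / (((q.1 + 1) + (q.2.2 + 1) : ℕ) : ℝ))) := by
  -- base summable sequences
  have hs0 : Summable (fun n : ℕ => ((n + 1 : ℕ) : ℝ) ^ (-σ₀)) := by
    have := Real.summable_nat_rpow.2 (show -σ₀ < -1 by linarith)
    exact (summable_nat_add_iff 1).2 this
  have hsσ : Summable (fun n : ℕ => ((n + 1 : ℕ) : ℝ) ^ (-σ)) := by
    have := Real.summable_nat_rpow.2 (show -σ < -1 by linarith)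
    exact (summable_nat_add_iff 1).2 this
  set C : ℝ := ∑' r : ℕ, ((r + 1 : ℕ) : ℝ) ^ (-σ) with hC
  have hCnn : 0 ≤ C := tsum_nonneg fun r => by positivity
  -- dominating function
  have hG : Summable (fun p : ℕ × ℕ =>
      ((p.1 + 1 : ℕ) : ℝ) ^ (-σ₀) * ((p.2 + 1 : ℕ) : ℝ) ^ (-σ)) :=
    hs0.mul_of_nonneg hsσ (fun n => by positivity) (fun n => by positivity)
  have hdom : Summable (fun q : ℕ × ℕ × ℕ =>
      (((q.1 + 1 : ℕ) : ℝ) ^ (-σ₀) *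
        (((q.2.1 + 1 : ℕ) : ℝ) ^ (-σ₀) * ((q.2.2 + 1 : ℕ) : ℝ) ^ (-σ))) * C) := by
    exact (hs0.mul_of_nonneg hG (fun n => by positivity)
      (fun p => by positivity)).mul_right C
  apply hdom.of_nonneg_of_le
  · rintro ⟨a, b, c⟩
    apply mul_nonneg (by positivity)
    apply Finset.sum_nonneg
    intro r hr
    have h1 : (1:ℝ) ≤ 1 + (r : ℝ) / ((a + 1) + (c + 1) : ℕ) := by
      have : (0:ℝ) ≤ (r : ℝ) / ((a + 1) + (c + 1) : ℕ) := by positivity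
      linarith
    have := Real.log_nonneg h1
    positivity
  · rintro ⟨a, b, c⟩
    simp only
    set N : ℕ := (a + 1) + (c + 1) with hN
    have hNpos : (0:ℝ) < (N : ℝ) := by positivity
    -- bound on the inner sum
    have key : ∀ r ∈ Finset.Icc 1 N,
        ((N : ℕ) : ℝ) ^ (-σ) * ((N + r : ℕ) : ℝ) ^ (-σ) /
          Real.log (1 + (r : ℝ) / (N : ℝ)) ≤
        ((N : ℕ) : ℝ) ^ (-σ) * ((r : ℕ) : ℝ) ^ (-σ) := by
      intro r hr
      obtain ⟨hr1, hr2⟩ := Finset.mem_Icc.1 hr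
      have hrpos : (0:ℝ) < (r : ℝ) := by exact_mod_cast hr1
      have hx : (0:ℝ) < (r : ℝ) / (N : ℝ) := by positivity
      have hlog : (r : ℝ) / ((N : ℝ) + r) ≤ Real.log (1 + (r : ℝ) / (N : ℝ)) := by
        have := log_ge_div ((r : ℝ) / (N : ℝ)) hx
        have heq : (r : ℝ) / (N : ℝ) / (1 + (r : ℝ) / (N : ℝ)) = (r : ℝ) / ((N : ℝ) + r) := by
          field_simp
        rwa [heq] at this
      have hlogpos : 0 < Real.log (1 + (r : ℝ) / (N : ℝ)) :=
        lt_of_lt_of_le (by positivity) hlog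
      have hNr : (0:ℝ) < (N : ℝ) + r := by positivity
      -- step 1: divide by smaller thing
      have step1 : ((N : ℕ) : ℝ) ^ (-σ) * ((N + r : ℕ) : ℝ) ^ (-σ) /
            Real.log (1 + (r : ℝ) / (N : ℝ)) ≤
          ((N : ℕ) : ℝ) ^ (-σ) * ((N + r : ℕ) : ℝ) ^ (-σ) / ((r : ℝ) / ((N : ℝ) + r)) := by
        apply div_le_div_of_nonneg_left (by positivity) (by positivity) hlog
      refine step1.trans ?_
      have hcast : ((N + r : ℕ) : ℝ) = (N : ℝ) + r := by push_cast; ring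
      rw [hcast]
      have lhs_eq : ((N:ℕ):ℝ) ^ (-σ) * ((N:ℝ) + r) ^ (-σ) / ((r : ℝ) / ((N:ℝ) + r))
          = ((N:ℕ):ℝ) ^ (-σ) * (((N:ℝ) + r) ^ (1 - σ) / r) := by
        rw [show (1 - σ) = -σ + 1 by ring, Real.rpow_add hNr, Real.rpow_one]
        field_simp
      have rhs_eq : ((r:ℕ):ℝ) ^ (-σ) = ((r:ℝ)) ^ (1 - σ) / r := by
        rw [show (-σ) = (1 - σ) - 1 by ring, Real.rpow_sub hrpos, Real.rpow_one]
      rw [lhs_eq, rhs_eq]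
      have e2 : ((N : ℝ) + r) ^ (1 - σ) ≤ (r : ℝ) ^ (1 - σ) :=
        Real.rpow_le_rpow_of_nonpos hrpos (by linarith) (by linarith)
      exact mul_le_mul_of_nonneg_left ((div_le_div_iff_of_pos_right hrpos).2 e2) (by positivity)
    have sumle : ∑ r ∈ Finset.Icc 1 N,
        ((N : ℕ) : ℝ) ^ (-σ) * ((N + r : ℕ) : ℝ) ^ (-σ) /
          Real.log (1 + (r : ℝ) / (N : ℝ)) ≤ ((N : ℕ) : ℝ) ^ (-σ) * C := by
      refine (Finset.sum_le_sum key).trans ?_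
      rw [← Finset.mul_sum]
      apply mul_le_mul_of_nonneg_left _ (by positivity)
      -- ∑_{r=1}^N r^{-σ} ≤ C
      have : ∑ r ∈ Finset.Icc 1 N, ((r : ℕ) : ℝ) ^ (-σ)
          = ∑ j ∈ Finset.range N, ((j + 1 : ℕ) : ℝ) ^ (-σ) := by
        rw [← Finset.Ico_add_one_right_eq_Icc, Finset.sum_Ico_eq_sum_range]
        simp [add_comm]
      rw [this]
      exact Summable.sum_le_tsum (Finset.range N) (fun j _ => by positivity) hsσ
    calc (((a + 1) * (b + 1) : ℕ) : ℝ) ^ (-σ₀) *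
          ∑ r ∈ Finset.Icc 1 N, ((N : ℕ) : ℝ) ^ (-σ) * ((N + r : ℕ) : ℝ) ^ (-σ) /
            Real.log (1 + (r : ℝ) / (N : ℝ))
        ≤ (((a + 1) * (b + 1) : ℕ) : ℝ) ^ (-σ₀) * (((N : ℕ) : ℝ) ^ (-σ) * C) := by
          apply mul_le_mul_of_nonneg_left sumle (by positivity)
      _ ≤ ((a + 1 : ℕ) : ℝ) ^ (-σ₀) *
            (((b + 1 : ℕ) : ℝ) ^ (-σ₀) * ((c + 1 : ℕ) : ℝ) ^ (-σ)) * C := by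
          have hmul : (((a + 1) * (b + 1) : ℕ) : ℝ) ^ (-σ₀)
              = ((a + 1 : ℕ) : ℝ) ^ (-σ₀) * ((b + 1 : ℕ) : ℝ) ^ (-σ₀) := by
            push_cast
            rw [Real.mul_rpow (by positivity) (by positivity)]
          have hNn : ((N : ℕ) : ℝ) ^ (-σ) ≤ ((c + 1 : ℕ) : ℝ) ^ (-σ) := by
            apply Real.rpow_le_rpow_of_nonpos (by positivity) _ (by linarith)
            exact_mod_cast Nat.le_add_left (c + 1) (a + 1)
          calc (((a + 1) * (b + 1) : ℕ) : ℝ) ^ (-σ₀) * (((N : ℕ) : ℝ) ^ (-σ) * C)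
              ≤ (((a + 1) * (b + 1) : ℕ) : ℝ) ^ (-σ₀) * (((c + 1 : ℕ) : ℝ) ^ (-σ) * C) := by
                apply mul_le_mul_of_nonneg_left _ (by positivity)
                exact mul_le_mul_of_nonneg_right hNn hCnn
            _ = ((a + 1 : ℕ) : ℝ) ^ (-σ₀) *
                (((b + 1 : ℕ) : ℝ) ^ (-σ₀) * ((c + 1 : ℕ) : ℝ) ^ (-σ)) * C := by
                rw [hmul]; ring
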